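/- arXiv:1601.00099 — 2 statements merged into one kernel-verified Lean document; each statement's English description precedes it below -/
import Mathlib

section
/- Let q > 1 be a real number, m ∈ ℤ, N ≥ 1 a natural number, and p ≥ 1 a real number. Let u : ℤ → ℝ satisfy u_k ≥ 0 and u_k ≤ u_{k+1} for all k. If for every integer k with m ≤ k ≤ m+N−1 one has u_k^p·(u_{k+1} − u_k)/((q−1)·q^k) ≥ (p/(q^{m+N} − q^m)^{p−1})·q·u_{k+2}^p·(q^{k+2} − q^m)^{p−1}, then Σ_{k=m}^{m+N−1} (q−1)·q^k·u_k^{p+2} − (1/(q^{m+N} − q^m)^{p−1})·(Σ_{k=m}^{m+N−1} (q−1)·q^k·u_k)^{p+1} ≥ u_m^p·(u_m − (p+1)·((q−1)·q^m)^p/(q^{m+N} − q^m)^{p−1}) · Σ_{k=m}^{m+N−1} (q−1)·q^k·u_k. -/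
open Real Finset

lemma mvt_rpow {r a b : ℝ} (hr : 1 ≤ r) (ha : 0 ≤ a) (hab : a ≤ b) :
    r * a ^ (r - 1) * (b - a) ≤ b ^ r - a ^ r ∧
      b ^ r - a ^ r ≤ r * b ^ (r - 1) * (b - a) := by
  rcases eq_or_lt_of_le hab with rfl | hlt
  · simp
  · obtain ⟨c, hc, hceq⟩ := exists_hasDerivAt_eq_slope (fun y : ℝ => y ^ r)
      (fun x => r * x ^ (r - 1)) hlt
      (fun x _ => (Real.hasDerivAt_rpow_const (Or.inr hr)).continuousAt.continuousWithinAt)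
      (fun x _ => Real.hasDerivAt_rpow_const (Or.inr hr))
    have hba : 0 < b - a := by linarith
    have heq : b ^ r - a ^ r = r * c ^ (r - 1) * (b - a) := by
      field_simp at hceq; linarith [hceq]
    have h1 : a ^ (r - 1) ≤ c ^ (r - 1) := Real.rpow_le_rpow ha hc.1.le (by linarith)
    have h2 : c ^ (r - 1) ≤ b ^ (r - 1) :=
      Real.rpow_le_rpow (le_trans ha hc.1.le) hc.2.le (by linarith)
    constructor <;> rw [heq] <;> gcongr

lemma qi_aux (p : ℝ) (hp : 1 ≤ p) (N : ℕ) (v c : ℕ → ℝ)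
    (hv0 : ∀ i, 0 ≤ v i) (hvm : ∀ i, v i ≤ v (i + 1)) (hc : ∀ i, 0 ≤ c i)
    (D : ℝ) (hD : 0 < D)
    (hyp : ∀ n : ℕ, n + 1 ≤ N →
      (p / D) * c (n + 1) * v (n + 2) ^ p * (∑ i ∈ Finset.range (n + 2), c i) ^ (p - 1)
        ≤ v n ^ p * (v (n + 1) - v n)) :
    (∑ i ∈ Finset.range N, c i * v i ^ (p + 2)) -
        (1 / D) * (∑ i ∈ Finset.range N, c i * v i) ^ (p + 1) ≥
      (v 0 ^ (p + 1) - ((p + 1) / D) * (c 0 * v 0) ^ p) *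
        ∑ i ∈ Finset.range N, c i * v i := by
  have hmono : Monotone v := monotone_nat_of_le_succ hvm
  set S : ℕ → ℝ := fun n => ∑ i ∈ Finset.range n, c i * v i with hS
  set A : ℕ → ℝ := fun n => ∑ i ∈ Finset.range n, c i with hA
  have hS0 : ∀ n, 0 ≤ S n := fun n =>
    Finset.sum_nonneg fun i _ => mul_nonneg (hc i) (hv0 i)
  have hA0 : ∀ n, 0 ≤ A n := fun n => Finset.sum_nonneg fun i _ => hc i
  have hSsucc : ∀ n, S (n + 1) = S n + c n * v n := fun n => Finset.sum_range_succ _ n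
  have hSle : ∀ n, S (n + 1) ≤ v n * A (n + 1) := by
    intro n
    have : S (n + 1) ≤ ∑ i ∈ Finset.range (n + 1), c i * v n := by
      apply Finset.sum_le_sum
      intro i hi
      exact mul_le_mul_of_nonneg_left (hmono (Nat.lt_succ_iff.mp (Finset.mem_range.mp hi)))
        (hc i)
    have h2 : ∑ i ∈ Finset.range (n + 1), c i * v n = v n * A (n + 1) := by
      rw [← Finset.sum_mul]; ring
    linarith [this, le_of_eq h2]
  set g : ℕ → ℝ := fun n => v n ^ (p + 1) - ((p + 1) / D) * (S (n + 1)) ^ p with hg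
  clear_value S A g
  have hAdef : ∀ k : ℕ, A k = ∑ i ∈ Finset.range k, c i := fun k => by rw [hA]
  have hgdef : ∀ k : ℕ, g k = v k ^ (p + 1) - ((p + 1) / D) * S (k + 1) ^ p :=
    fun k => by rw [hg]
  -- claim 1 : g is monotone up to N
  have claim1 : ∀ n, n + 1 ≤ N → g 0 ≤ g n := by
    intro n
    induction n with
    | zero => intro _; exact le_refl _
    | succ n ih =>
      intro hn
      have hstep : g n ≤ g (n + 1) := by
        have hmvt1 := (mvt_rpow (r := p + 1) (by linarith) (hv0 n) (hvm n)).1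
        have hmvt2 := (mvt_rpow (r := p) hp (hS0 (n + 1))
          (show S (n + 1) ≤ S (n + 2) by
            rw [hSsucc (n+1)]; nlinarith [mul_nonneg (hc (n+1)) (hv0 (n+1))])).2
        have hSd : S (n + 2) - S (n + 1) = c (n + 1) * v (n + 1) := by
          rw [hSsucc (n+1)]; ring
        -- bound S(n+2)^(p-1) * v (n+1) ≤ v(n+2)^p * A(n+2)^(p-1)
        have h1 : S (n + 2) ^ (p - 1) ≤ v (n + 1) ^ (p - 1) * A (n + 2) ^ (p - 1) := by
          rw [← Real.mul_rpow (hv0 _) (hA0 _)]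
          exact Real.rpow_le_rpow (hS0 _) (hSle (n + 1)) (by linarith)
        have h2 : v (n + 1) ^ (p - 1) * v (n + 1) = v (n + 1) ^ p := by
          nth_rewrite 2 [show v (n+1) = v (n+1) ^ (1:ℝ) by rw [Real.rpow_one]]
          rw [← Real.rpow_add' (hv0 _) (by intro h0; linarith)]
          norm_num
        have h3 : v (n + 1) ^ p ≤ v (n + 2) ^ p :=
          Real.rpow_le_rpow (hv0 _) (hvm (n + 1)) (by linarith)
        have hkey : S (n + 2) ^ (p - 1) * v (n + 1) ≤ v (n + 2) ^ p * A (n + 2) ^ (p - 1) := by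
          calc S (n + 2) ^ (p - 1) * v (n + 1)
              ≤ (v (n + 1) ^ (p - 1) * A (n + 2) ^ (p - 1)) * v (n + 1) :=
                mul_le_mul_of_nonneg_right h1 (hv0 _)
            _ = (v (n + 1) ^ (p - 1) * v (n + 1)) * A (n + 2) ^ (p - 1) := by ring
            _ = v (n + 1) ^ p * A (n + 2) ^ (p - 1) := by rw [h2]
            _ ≤ v (n + 2) ^ p * A (n + 2) ^ (p - 1) :=
                mul_le_mul_of_nonneg_right h3 (Real.rpow_nonneg (hA0 _) _)
        have hy := hyp n (by omega)
        rw [← hAdef (n + 2)] at hy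
        -- main chain
        have hchain : ((p + 1) / D) * (S (n + 2) ^ p - S (n + 1) ^ p)
            ≤ v (n + 1) ^ (p + 1) - v n ^ (p + 1) := by
          have hpD : 0 ≤ (p + 1) / D := by positivity
          have e1 : ((p + 1) / D) * (S (n + 2) ^ p - S (n + 1) ^ p)
              ≤ ((p + 1) / D) * (p * S (n + 2) ^ (p - 1) * (S (n + 2) - S (n + 1))) :=
            mul_le_mul_of_nonneg_left hmvt2 hpD
          have e2 : ((p + 1) / D) * (p * S (n + 2) ^ (p - 1) * (S (n + 2) - S (n + 1)))
              = (p + 1) * ((p / D) * c (n + 1) * (S (n + 2) ^ (p - 1) * v (n + 1))) := by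
            rw [hSd]; ring
          have e3 : (p + 1) * ((p / D) * c (n + 1) * (S (n + 2) ^ (p - 1) * v (n + 1)))
              ≤ (p + 1) * ((p / D) * c (n + 1) * (v (n + 2) ^ p * A (n + 2) ^ (p - 1))) := by
            have h4 : 0 ≤ (p / D) * c (n + 1) := by
              have := hc (n + 1); positivity
            gcongr
          have e4 : (p / D) * c (n + 1) * (v (n + 2) ^ p * A (n + 2) ^ (p - 1))
              ≤ v n ^ p * (v (n + 1) - v n) := by
            calc (p / D) * c (n + 1) * (v (n + 2) ^ p * A (n + 2) ^ (p - 1))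
                = (p / D) * c (n + 1) * v (n + 2) ^ p * A (n + 2) ^ (p - 1) := by ring
              _ ≤ v n ^ p * (v (n + 1) - v n) := hy
          have e5 : (p + 1) * ((p / D) * c (n + 1) * (v (n + 2) ^ p * A (n + 2) ^ (p - 1)))
              ≤ (p + 1) * (v n ^ p * (v (n + 1) - v n)) := by
            apply mul_le_mul_of_nonneg_left e4 (by linarith)
          have e6 : (p + 1) * (v n ^ p * (v (n + 1) - v n))
              ≤ v (n + 1) ^ (p + 1) - v n ^ (p + 1) := by
            have : (p + 1) * v n ^ ((p + 1) - 1) * (v (n + 1) - v n)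
                ≤ v (n + 1) ^ (p + 1) - v n ^ (p + 1) := hmvt1
            calc (p + 1) * (v n ^ p * (v (n + 1) - v n))
                = (p + 1) * v n ^ ((p + 1) - 1) * (v (n + 1) - v n) := by norm_num; ring
              _ ≤ _ := this
          linarith
        have hg' : v n ^ (p + 1) - ((p + 1) / D) * S (n + 1) ^ p
            ≤ v (n + 1) ^ (p + 1) - ((p + 1) / D) * S (n + 2) ^ p := by linarith
        have hgn1 : g (n + 1) = v (n + 1) ^ (p + 1) - ((p + 1) / D) * S (n + 2) ^ p := by
          rw [hgdef (n + 1)]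
        rw [hgdef n, hgn1]; exact hg'
      exact le_trans (ih (by omega)) hstep
  -- claim 2 : G n ≥ 0
  have claim2 : ∀ n, n ≤ N →
      0 ≤ (∑ i ∈ Finset.range n, c i * v i ^ (p + 2)) - (1 / D) * (S n) ^ (p + 1)
        - g 0 * S n := by
    intro n
    induction n with
    | zero =>
      intro _
      simp [hS, Real.zero_rpow (by positivity : p + 1 ≠ 0)]
    | succ n ih =>
      intro hn
      have ihn := ih (by omega)
      have hmvt := (mvt_rpow (r := p + 1) (by linarith) (hS0 n)
        (show S n ≤ S (n + 1) by
          rw [hSsucc n]; nlinarith [mul_nonneg (hc n) (hv0 n)])).2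
      have hvp : v n ^ (p + 2) = v n ^ (p + 1) * v n := by
        rw [show p + 2 = (p + 1) + 1 by ring,
          Real.rpow_add' (hv0 n) (by norm_num; linarith), Real.rpow_one]
      have hgn : g 0 ≤ g n := claim1 n hn
      have hsum := Finset.sum_range_succ (fun i => c i * v i ^ (p + 2)) n
      have hcv : 0 ≤ c n * v n := mul_nonneg (hc n) (hv0 n)
      have hstep : g 0 * (c n * v n) ≤ c n * v n ^ (p + 2)
          - (1 / D) * (S (n + 1) ^ (p + 1) - S n ^ (p + 1)) := by
        have b1 : (1 / D) * (S (n + 1) ^ (p + 1) - S n ^ (p + 1))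
            ≤ (1 / D) * ((p + 1) * S (n + 1) ^ ((p + 1) - 1) * (S (n + 1) - S n)) :=
          mul_le_mul_of_nonneg_left hmvt (by positivity)
        have b2 : (1 / D) * ((p + 1) * S (n + 1) ^ ((p + 1) - 1) * (S (n + 1) - S n))
            = (c n * v n) * (((p + 1) / D) * S (n + 1) ^ p) := by
          rw [hSsucc n]; norm_num; field_simp
        have b3 : g n * (c n * v n) ≤ (v n ^ (p + 1) - ((p + 1) / D) * S (n + 1) ^ p)
            * (c n * v n) := le_of_eq (by rw [hgdef n])
        have b4 : g 0 * (c n * v n) ≤ g n * (c n * v n) :=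
          mul_le_mul_of_nonneg_right hgn hcv
        have b5 : (v n ^ (p + 1) - ((p + 1) / D) * S (n + 1) ^ p) * (c n * v n)
            = c n * v n ^ (p + 2) - (c n * v n) * (((p + 1) / D) * S (n + 1) ^ p) := by
          rw [hvp]; ring
        calc g 0 * (c n * v n) ≤ g n * (c n * v n) := b4
          _ ≤ (v n ^ (p + 1) - (p + 1) / D * S (n + 1) ^ p) * (c n * v n) := b3
          _ = c n * v n ^ (p + 2) - c n * v n * ((p + 1) / D * S (n + 1) ^ p) := b5
          _ = c n * v n ^ (p + 2)
              - (1 / D) * ((p + 1) * S (n + 1) ^ ((p + 1) - 1) * (S (n + 1) - S n)) := by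
                rw [b2]
          _ ≤ c n * v n ^ (p + 2) - (1 / D) * (S (n + 1) ^ (p + 1) - S n ^ (p + 1)) := by
                linarith [b1]
      have hlin : g 0 * S (n + 1) = g 0 * S n + g 0 * (c n * v n) := by
        rw [hSsucc n]; ring
      rw [hsum]
      linarith [ihn, hstep, hlin, hSsucc n]
  have hfin := claim2 N le_rfl
  have hg0 : g 0 = v 0 ^ (p + 1) - ((p + 1) / D) * (c 0 * v 0) ^ p := by
    have h1 : S 1 = c 0 * v 0 := by simp [hS]
    simp only [hg, h1]
  rw [ge_iff_le, ← hg0]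
  simp only [hS] at hfin
  linarith [hfin]

theorem qi_time_scale_qZ_thm32
    (q : ℝ) (hq : 1 < q) (m : ℤ) (N : ℕ) (hN : 1 ≤ N) (p : ℝ) (hp : 1 ≤ p)
    (u : ℤ → ℝ)
    (hnonneg : ∀ k : ℤ, 0 ≤ u k)
    (hmono : ∀ k : ℤ, u k ≤ u (k + 1))
    (hyp : ∀ k : ℤ, m ≤ k → k ≤ m + (N : ℤ) - 1 →
      (p / (q ^ (m + (N : ℤ)) - q ^ m) ^ (p - 1)) * q * u (k + 2) ^ p *
          (q ^ (k + 2) - q ^ m) ^ (p - 1) ≤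
        u k ^ p * (u (k + 1) - u k) / ((q - 1) * q ^ k)) :
    (∑ k ∈ Finset.Icc m (m + (N : ℤ) - 1), (q - 1) * q ^ k * u k ^ (p + 2)) -
        (1 / (q ^ (m + (N : ℤ)) - q ^ m) ^ (p - 1)) *
          (∑ k ∈ Finset.Icc m (m + (N : ℤ) - 1), (q - 1) * q ^ k * u k) ^ (p + 1) ≥
      u m ^ p *
          (u m - (p + 1) * ((q - 1) * q ^ m) ^ p /
            (q ^ (m + (N : ℤ)) - q ^ m) ^ (p - 1)) *
        ∑ k ∈ Finset.Icc m (m + (N : ℤ) - 1), (q - 1) * q ^ k * u k := by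
  have hq0 : (0:ℝ) < q := by linarith
  have hq0' : q ≠ 0 := ne_of_gt hq0
  -- Icc sums as range sums
  have hIcc : ∀ (f : ℤ → ℝ) (n : ℕ), ∑ k ∈ Finset.Icc m (m + (n:ℤ) - 1), f k
      = ∑ i ∈ Finset.range n, f (m + (i:ℤ)) := by
    intro f n
    induction n with
    | zero =>
      rw [Finset.Icc_eq_empty (by omega : ¬ (m ≤ m + ((0:ℕ):ℤ) - 1))]
      simp
    | succ n ih =>
      have h1 : Finset.Icc m (m + (((n:ℕ)+1:ℕ):ℤ) - 1)
          = insert (m + (n:ℤ)) (Finset.Icc m (m + (n:ℤ) - 1)) := by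
        ext x
        simp only [Finset.mem_Icc, Finset.mem_insert]
        omega
      have h2 : (m + (n:ℤ)) ∉ Finset.Icc m (m + (n:ℤ) - 1) := by
        simp only [Finset.mem_Icc]; omega
      rw [h1, Finset.sum_insert h2, ih, Finset.sum_range_succ, add_comm]
  -- telescope
  have htel : ∀ n : ℕ, ∑ i ∈ Finset.range n, (q - 1) * q ^ (m + (i:ℤ))
      = q ^ (m + (n:ℤ)) - q ^ m := by
    intro n
    induction n with
    | zero => simp
    | succ n ih =>
      rw [Finset.sum_range_succ, ih,
        show m + (((n:ℕ)+1:ℕ):ℤ) = (m + (n:ℤ)) + 1 by push_cast; ring,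
        zpow_add_one₀ hq0']
      ring
  have hB : (0:ℝ) < q ^ (m + (N:ℤ)) - q ^ m := by
    have h1 : q ^ (m + (N:ℤ)) = q ^ m * q ^ (N:ℤ) := zpow_add₀ hq0' m N
    have h2 : (1:ℝ) < q ^ (N:ℤ) := by
      rw [zpow_natCast]
      exact one_lt_pow₀ hq (by omega)
    have h3 : (0:ℝ) < q ^ m := zpow_pos hq0 m
    nlinarith
  set D : ℝ := (q ^ (m + (N:ℤ)) - q ^ m) ^ (p - 1) with hD
  have hD0 : 0 < D := Real.rpow_pos_of_pos hB _
  have hcpos : ∀ i : ℕ, (0:ℝ) < (q - 1) * q ^ (m + (i:ℤ)) :=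
    fun i => mul_pos (by linarith) (zpow_pos hq0 _)
  have H := qi_aux p hp N (fun i => u (m + (i:ℤ))) (fun i => (q - 1) * q ^ (m + (i:ℤ)))
    (fun i => hnonneg _)
    (fun i => by
      have := hmono (m + (i:ℤ))
      simpa [show m + ((i:ℕ)+1:ℤ) = m + (i:ℤ) + 1 by push_cast; ring,
        show ((((i:ℕ)+1:ℕ)):ℤ) = (i:ℤ) + 1 by push_cast; ring] using this)
    (fun i => (hcpos i).le) D hD0
    (by
      intro n hn
      have hk1 : m ≤ m + (n:ℤ) := by omega
      have hk2 : m + (n:ℤ) ≤ m + (N:ℤ) - 1 := by omega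
      have hy := hyp (m + (n:ℤ)) hk1 hk2
      have hw : (0:ℝ) < (q - 1) * q ^ (m + (n:ℤ)) := hcpos n
      have hy2 := mul_le_mul_of_nonneg_right hy hw.le
      rw [div_mul_cancel₀ _ (ne_of_gt hw)] at hy2
      show (p / D) * ((q - 1) * q ^ (m + (((n:ℕ)+1:ℕ):ℤ))) * u (m + (((n:ℕ)+2:ℕ):ℤ)) ^ p *
          (∑ i ∈ Finset.range (n + 2), (q - 1) * q ^ (m + (i:ℤ))) ^ (p - 1)
          ≤ u (m + (n:ℤ)) ^ p * (u (m + (((n:ℕ)+1:ℕ):ℤ)) - u (m + (n:ℤ)))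
      rw [htel (n + 2)]
      rw [show m + (((n:ℕ)+1:ℕ):ℤ) = m + (n:ℤ) + 1 by push_cast; ring,
        show m + (((n:ℕ)+2:ℕ):ℤ) = m + (n:ℤ) + 2 by push_cast; ring]
      calc (p / D) * ((q - 1) * q ^ (m + (n:ℤ) + 1)) * u (m + (n:ℤ) + 2) ^ p *
            (q ^ (m + (n:ℤ) + 2) - q ^ m) ^ (p - 1)
          = (p / D) * q * u (m + (n:ℤ) + 2) ^ p * (q ^ (m + (n:ℤ) + 2) - q ^ m) ^ (p - 1) *
            ((q - 1) * q ^ (m + (n:ℤ))) := by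
            rw [zpow_add_one₀ hq0' (m + (n:ℤ))]; ring
        _ ≤ u (m + (n:ℤ)) ^ p * (u (m + (n:ℤ) + 1) - u (m + (n:ℤ))) := hy2)
  -- rewrite goal
  simp only [hIcc]
  have hm0 : m + ((0:ℕ):ℤ) = m := by simp
  have hcoef : u m ^ p * (u m - (p + 1) * ((q - 1) * q ^ m) ^ p / D)
      = u (m + ((0:ℕ):ℤ)) ^ (p + 1) -
        ((p + 1) / D) * (((q - 1) * q ^ (m + ((0:ℕ):ℤ))) * u (m + ((0:ℕ):ℤ))) ^ p := by
    rw [hm0]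
    have h1 : ((q - 1) * q ^ m * u m) ^ p = ((q - 1) * q ^ m) ^ p * u m ^ p := by
      have := hcpos 0
      rw [hm0] at this
      exact Real.mul_rpow this.le (hnonneg m)
    have h2 : u m ^ (p + 1) = u m ^ p * u m := by
      rw [Real.rpow_add' (hnonneg m) (by intro h0; linarith), Real.rpow_one]
    rw [h1, h2]
    field_simp
  beta_reduce at H
  rw [hcoef]
  exact H
end

section
/- Let q > 1 be a real number, m ∈ ℤ, N ≥ 1 a natural number, and t ≥ 3 a real number. Let u : ℤ → ℝ satisfy u_k ≥ 0 and u_k ≤ u_{k+1} for all k. If for every integer k with m+1 ≤ k ≤ m+N one has u_{k−1}^{t−2}·(u_k − u_{k−1})/(q^k − q^{k−1}) ≥ (t−2)·u_k^{t−2}·(q^k − q^m)^{t−3}, then Σ_{k=m+1}^{m+N} (q^k − q^{k−1})·u_k^t − (Σ_{k=m+1}^{m+N} (q^k − q^{k−1})·u_k)^{t−1} ≥ u_m^{t−1} · Σ_{k=m+1}^{m+N} (q^k − q^{k−1})·u_k. -/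
open Real Finset

/-- Convexity upper bound: tangent-chord inequality at `b`. -/
lemma qi_aux_upper {p a b : ℝ} (hp : 1 ≤ p) (ha : 0 ≤ a) (hab : a ≤ b) :
    b ^ p ≤ a ^ p + p * b ^ (p - 1) * (b - a) := by
  rcases eq_or_lt_of_le (ha.trans hab) with hb | hb
  · have ha0 : a = 0 := le_antisymm (hab.trans hb.ge) ha
    subst ha0
    rw [← hb]
    simp [Real.zero_rpow (by positivity : (1:ℝ) ≤ p).trans_lt' one_pos |>.ne']
  · have hs : (-1 : ℝ) ≤ (a - b) / b := by
      rw [neg_le, ← neg_div, neg_sub]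
      exact (div_le_one hb).2 (by linarith)
    have key := one_add_mul_self_le_rpow_one_add hs hp
    have h1 : (1 : ℝ) + (a - b) / b = a / b := by field_simp; ring
    rw [h1] at key
    have h2 : (a / b) ^ p = a ^ p / b ^ p := Real.div_rpow ha hb.le p
    rw [h2] at key
    have hbp : (0:ℝ) < b ^ p := Real.rpow_pos_of_pos hb p
    have key2 : (1 + p * ((a - b) / b)) * b ^ p ≤ a ^ p := (le_div_iff₀ hbp).1 key
    have hbp1 : b ^ (p - 1) * b = b ^ p := by
      rw [← Real.rpow_add_one hb.ne']
      ring_nf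
    have hexp : (1 + p * ((a - b) / b)) * b ^ p = b ^ p + p * (a - b) / b * b ^ p := by ring
    have h3 : p * (a - b) / b * b ^ p = p * b ^ (p-1) * (a - b) := by
      rw [← hbp1]; field_simp
    nlinarith [key2]

/-- Convexity lower bound: tangent line at `a`. -/
lemma qi_aux_lower {p a b : ℝ} (hp : 1 < p) (ha : 0 ≤ a) (hab : a ≤ b) :
    a ^ p + p * a ^ (p - 1) * (b - a) ≤ b ^ p := by
  rcases eq_or_lt_of_le ha with ha0 | ha0
  · rw [← ha0]
    rw [Real.zero_rpow (by linarith : p ≠ 0), Real.zero_rpow (by linarith : p - 1 ≠ 0)]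
    simpa using Real.rpow_nonneg (ha0 ▸ hab : (0:ℝ) ≤ b) p
  · have hs : (-1 : ℝ) ≤ (b - a) / a := by
      have h0 : (0:ℝ) ≤ (b - a) / a := div_nonneg (by linarith) ha0.le
      linarith
    have key := one_add_mul_self_le_rpow_one_add hs hp.le
    have h1 : (1 : ℝ) + (b - a) / a = b / a := by field_simp; ring
    rw [h1, Real.div_rpow (ha0.le.trans hab) ha0.le p] at key
    have hap : (0:ℝ) < a ^ p := Real.rpow_pos_of_pos ha0 p
    have key2 : (1 + p * ((b - a) / a)) * a ^ p ≤ b ^ p := (le_div_iff₀ hap).1 key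
    have hap1 : a ^ (p - 1) * a = a ^ p := by
      rw [← Real.rpow_add_one ha0.ne']; ring_nf
    have h3 : p * (b - a) / a * a ^ p = p * a ^ (p-1) * (b - a) := by
      rw [← hap1]; field_simp
    have hexp : (1 + p * ((b - a) / a)) * a ^ p = a ^ p + p * (b - a) / a * a ^ p := by ring
    linarith [key2, h3, hexp]

lemma qi_sum_succ (m : ℤ) (n : ℕ) (f : ℤ → ℝ) :
    ∑ k ∈ Finset.Icc (m + 1) (m + ((n + 1 : ℕ) : ℤ)), f k =
      (∑ k ∈ Finset.Icc (m + 1) (m + (n : ℤ)), f k) + f (m + (n : ℤ) + 1) := by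
  have h1 : m + ((n + 1 : ℕ) : ℤ) = m + (n : ℤ) + 1 := by push_cast; ring
  rw [h1]
  have hins : Finset.Icc (m + 1) (m + (n:ℤ) + 1)
      = insert (m + (n:ℤ) + 1) (Finset.Icc (m + 1) (m + (n:ℤ))) := by
    ext x; simp only [Finset.mem_Icc, Finset.mem_insert]; omega
  rw [hins, Finset.sum_insert (by simp [Finset.mem_Icc])]
  ring

noncomputable def qiS (q : ℝ) (m : ℤ) (u : ℤ → ℝ) (n : ℕ) : ℝ :=
  ∑ k ∈ Finset.Icc (m + 1) (m + (n : ℤ)), (q ^ k - q ^ (k - 1)) * u k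

noncomputable def qiT (q t : ℝ) (m : ℤ) (u : ℤ → ℝ) (n : ℕ) : ℝ :=
  ∑ k ∈ Finset.Icc (m + 1) (m + (n : ℤ)), (q ^ k - q ^ (k - 1)) * u k ^ t

set_option maxHeartbeats 1000000 in
theorem qi_nabla_qZ_thm36
    (q : ℝ) (hq : 1 < q) (m : ℤ) (N : ℕ) (hN : 1 ≤ N) (t : ℝ) (ht : 3 ≤ t)
    (u : ℤ → ℝ)
    (hnonneg : ∀ k : ℤ, 0 ≤ u k)
    (hmono : ∀ k : ℤ, u k ≤ u (k + 1))
    (hyp : ∀ k : ℤ, m + 1 ≤ k → k ≤ m + (N : ℤ) →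
      (t - 2) * u k ^ (t - 2) * (q ^ k - q ^ m) ^ (t - 3) ≤
        u (k - 1) ^ (t - 2) * (u k - u (k - 1)) / (q ^ k - q ^ (k - 1))) :
    (∑ k ∈ Finset.Icc (m + 1) (m + (N : ℤ)), (q ^ k - q ^ (k - 1)) * u k ^ t) -
        (∑ k ∈ Finset.Icc (m + 1) (m + (N : ℤ)), (q ^ k - q ^ (k - 1)) * u k) ^ (t - 1) ≥
      u m ^ (t - 1) *
        ∑ k ∈ Finset.Icc (m + 1) (m + (N : ℤ)), (q ^ k - q ^ (k - 1)) * u k := by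
  have hq0 : (0:ℝ) < q := lt_trans one_pos hq
  have hmonoZ : Monotone u := monotone_int_of_le_succ hmono
  have key : ∀ n : ℕ, n ≤ N →
      0 ≤ qiS q m u n ∧
      qiS q m u n ≤ u (m + (n:ℤ)) * (q ^ (m + (n:ℤ)) - q ^ m) ∧
      (t - 1) * qiS q m u n ^ (t - 2) + u m ^ (t - 1) ≤ u (m + (n:ℤ)) ^ (t - 1) ∧
      qiS q m u n ^ (t - 1) + u m ^ (t - 1) * qiS q m u n ≤ qiT q t m u n := by
    intro n
    induction n with
    | zero =>
      intro _
      have hS0 : qiS q m u 0 = 0 := by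
        unfold qiS
        rw [show m + ((0:ℕ):ℤ) = m by simp, Finset.Icc_eq_empty (by omega), Finset.sum_empty]
      have hT0 : qiT q t m u 0 = 0 := by
        unfold qiT
        rw [show m + ((0:ℕ):ℤ) = m by simp, Finset.Icc_eq_empty (by omega), Finset.sum_empty]
      rw [hS0, hT0, show m + ((0:ℕ):ℤ) = m by simp]
      rw [Real.zero_rpow (by linarith : t - 2 ≠ 0), Real.zero_rpow (by linarith : t - 1 ≠ 0)]
      refine ⟨le_refl 0, by simp, by simp, by simp⟩
    | succ n ih =>
      intro hn1
      obtain ⟨hX0, hXb, hH, hG⟩ := ih (by omega)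
      set X := qiS q m u n with hXdef
      set A := u (m + (n:ℤ)) with hAdef
      set B := u (m + (n:ℤ) + 1) with hBdef
      set wk : ℝ := q ^ (m + (n:ℤ) + 1) - q ^ (m + (n:ℤ)) with hwkdef
      have hwk : 0 < wk := sub_pos.2 (zpow_lt_zpow_right₀ hq (by omega))
      have hSrec : qiS q m u (n+1) = X + wk * B := by
        rw [hXdef]
        unfold qiS
        rw [qi_sum_succ m n (fun k => (q ^ k - q ^ (k - 1)) * u k)]
        rw [show m + (n:ℤ) + 1 - 1 = m + (n:ℤ) by ring]
      have hTrec : qiT q t m u (n+1) = qiT q t m u n + wk * B ^ t := by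
        unfold qiT
        rw [qi_sum_succ m n (fun k => (q ^ k - q ^ (k - 1)) * u k ^ t)]
        rw [show m + (n:ℤ) + 1 - 1 = m + (n:ℤ) by ring]
      have hAB : A ≤ B := by
        have := hmono (m + (n:ℤ)); exact this
      have hA0 : 0 ≤ A := hnonneg _
      have hB0 : 0 ≤ B := hnonneg _
      have hum0 : 0 ≤ u m := hnonneg m
      have hum : u m ≤ A := hmonoZ (by omega)
      have hY0 : 0 ≤ X + wk * B := add_nonneg hX0 (mul_nonneg hwk.le hB0)
      have hXY : X ≤ X + wk * B := by nlinarith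
      have hqm1 : q ^ m ≤ q ^ (m + (n:ℤ)) := zpow_le_zpow_right₀ hq.le (by omega)
      have hqm2 : q ^ (m + (n:ℤ)) ≤ q ^ (m + (n:ℤ) + 1) := zpow_le_zpow_right₀ hq.le (by omega)
      -- new bound on S
      have hYb : X + wk * B ≤ B * (q ^ (m + (n:ℤ) + 1) - q ^ m) := by
        have h1 : A * (q ^ (m + (n:ℤ)) - q ^ m) ≤ B * (q ^ (m + (n:ℤ)) - q ^ m) :=
          mul_le_mul_of_nonneg_right hAB (by linarith)
        rw [hwkdef]; nlinarith
      set Y := X + wk * B with hYdef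
      -- the hypothesis at k = m+n+1
      have hyp' : (t - 2) * B ^ (t - 2) * (q ^ (m + (n:ℤ) + 1) - q ^ m) ^ (t - 3) ≤
          A ^ (t - 2) * (B - A) / wk := by
        have h := hyp (m + (n:ℤ) + 1) (by omega) (by omega)
        rw [show m + (n:ℤ) + 1 - 1 = m + (n:ℤ) by ring] at h
        exact h
      have hyp'' : (t - 2) * B ^ (t - 2) * (q ^ (m + (n:ℤ) + 1) - q ^ m) ^ (t - 3) * wk ≤
          A ^ (t - 2) * (B - A) := by
        have := (le_div_iff₀ hwk).1 hyp'
        linarith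
      -- bound  Y^(t-3) * B ≤ B^(t-2) * (q^k - q^m)^(t-3)
      have hbound : Y ^ (t - 3) * B ≤ B ^ (t - 2) * (q ^ (m + (n:ℤ) + 1) - q ^ m) ^ (t - 3) := by
        rcases eq_or_lt_of_le hB0 with hB | hB
        · rw [← hB, mul_zero, Real.zero_rpow (by linarith : t - 2 ≠ 0), zero_mul]
        · have hqk0 : (0:ℝ) ≤ q ^ (m + (n:ℤ) + 1) - q ^ m := by linarith
          have h1 : Y ^ (t - 3) ≤ (B * (q ^ (m + (n:ℤ) + 1) - q ^ m)) ^ (t - 3) :=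
            Real.rpow_le_rpow hY0 hYb (by linarith)
          rw [Real.mul_rpow hB0 hqk0] at h1
          have h2 : Y ^ (t-3) * B ≤ B ^ (t-3) * (q ^ (m + (n:ℤ) + 1) - q ^ m) ^ (t-3) * B :=
            mul_le_mul_of_nonneg_right h1 hB0
          have h3 : B ^ (t-3) * (q ^ (m + (n:ℤ) + 1) - q ^ m) ^ (t-3) * B
              = B ^ (t-2) * (q ^ (m + (n:ℤ) + 1) - q ^ m) ^ (t-3) := by
            rw [show t - 2 = (t - 3) + 1 by ring, Real.rpow_add_one hB.ne']
            ring
          linarith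
      -- convexity estimates
      have hup : Y ^ (t - 2) ≤ X ^ (t - 2) + (t - 2) * Y ^ (t - 3) * (wk * B) := by
        have := qi_aux_upper (by linarith : (1:ℝ) ≤ t - 2) hX0 hXY
        rw [show t - 2 - 1 = t - 3 by ring] at this
        have hYX : (X + wk * B) - X = wk * B := by ring
        rw [hYdef]
        calc Y ^ (t-2) = (X + wk * B) ^ (t - 2) := by rw [hYdef]
        _ ≤ X ^ (t-2) + (t-2) * (X + wk*B) ^ (t-3) * ((X + wk*B) - X) := this
        _ = X ^ (t-2) + (t-2) * Y ^ (t-3) * (wk * B) := by rw [hYdef]; ring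
      have hlow : A ^ (t - 1) + (t - 1) * A ^ (t - 2) * (B - A) ≤ B ^ (t - 1) := by
        have := qi_aux_lower (by linarith : (1:ℝ) < t - 1) hA0 hAB
        rw [show t - 1 - 1 = t - 2 by ring] at this
        exact this
      -- the new H inequality
      have hHnew : (t - 1) * Y ^ (t - 2) + u m ^ (t - 1) ≤ B ^ (t - 1) := by
        have s1 := mul_le_mul_of_nonneg_left hup (by linarith : (0:ℝ) ≤ t - 1)
        have s2 := mul_le_mul_of_nonneg_left hbound
          (mul_nonneg (mul_nonneg (by linarith) (by linarith)) hwk.le :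
            (0:ℝ) ≤ (t - 1) * (t - 2) * wk)
        have s3 := mul_le_mul_of_nonneg_left hyp'' (by linarith : (0:ℝ) ≤ t - 1)
        linarith [s1, s2, s3, hlow, hH]
      -- the new G inequality
      have hup2 : Y ^ (t - 1) ≤ X ^ (t - 1) + (t - 1) * Y ^ (t - 2) * (wk * B) := by
        have := qi_aux_upper (by linarith : (1:ℝ) ≤ t - 1) hX0 hXY
        rw [show t - 1 - 1 = t - 2 by ring] at this
        calc Y ^ (t-1) = (X + wk * B) ^ (t - 1) := by rw [hYdef]
        _ ≤ X ^ (t-1) + (t-1) * (X + wk*B) ^ (t-2) * ((X + wk*B) - X) := this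
        _ = X ^ (t-1) + (t-1) * Y ^ (t-2) * (wk * B) := by rw [hYdef]; ring
      have hBt : wk * B ^ t = wk * B * B ^ (t - 1) := by
        rcases eq_or_lt_of_le hB0 with hB | hB
        · rw [← hB, Real.zero_rpow (by linarith : t ≠ 0)]; ring
        · rw [show t = (t - 1) + 1 by ring, Real.rpow_add_one hB.ne']
          ring_nf
      have hGnew : Y ^ (t - 1) + u m ^ (t - 1) * Y ≤ qiT q t m u (n+1) := by
        rw [hTrec, hBt]
        have s4 := mul_le_mul_of_nonneg_left hHnew (mul_nonneg hwk.le hB0 : (0:ℝ) ≤ wk * B)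
        have hsplit : u m ^ (t - 1) * Y = u m ^ (t - 1) * X + u m ^ (t - 1) * (wk * B) := by
          rw [hYdef]; ring
        linarith [hup2, s4, hG, hsplit]
      refine ⟨?_, ?_, ?_, ?_⟩
      · rw [hSrec]; exact hY0
      · rw [hSrec, show m + ((n+1:ℕ):ℤ) = m + (n:ℤ) + 1 by push_cast; ring]
        exact hYb
      · rw [hSrec, show m + ((n+1:ℕ):ℤ) = m + (n:ℤ) + 1 by push_cast; ring]
        exact hHnew
      · rw [hSrec]
        exact hGnew
  obtain ⟨-, -, -, hG⟩ := key N le_rfl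
  unfold qiS qiT at hG
  linarith
end
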